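/- Let X be a finite percept alphabet and A a finite action alphabet. Let M be a finite class of environments, where an environment ρ assigns to every n and every action sequence a_{1:n} ∈ A^n a probability mass function ρ(· | a_{1:n}) on X^n satisfying the chronological consistency condition Σ_{x_n ∈ X} ρ(x_{1:n} | a_{1:n}) = ρ(x_{<n} | a_{<n}). Let w : M → (0,1] with Σ_{ρ∈M} w_ρ = 1, let ξ(x_{1:n} | a_{1:n}) = Σ_{ρ∈M} w_ρ ρ(x_{1:n} | a_{1:n}) be the Bayesian mixture, and let μ be any environment (with conditionals μ(x_k | x_{<k}, a_{1:k}) = μ(x_{1:k}|a_{1:k})/μ(x_{<k}|a_{<k}) whenever the denominator is positive, and similarly for ξ). Then for all n ∈ ℕ and all action sequences a_{1:n}: Σ_{k=1}^{n} Σ_{x_{1:k}} μ(x_{<k} | a_{<k}) · (μ(x_k | x_{<k}, a_{1:k}) − ξ(x_k | x_{<k}, a_{1:k}))² ≤ min_{ρ∈M} { ln(1/w_ρ) + Σ_{x_{1:n}} μ(x_{1:n}|a_{1:n}) ln( μ(x_{1:n}|a_{1:n}) / ρ(x_{1:n}|a_{1:n}) ) }. -/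

import Mathlib

open scoped Classical

namespace MixtureBound

/-- Conditional probability of the last percept given the length-`m` prefix of
percepts and the actions, with the convention `0/0 = 0`. -/
noncomputable def cond {X A : Type} (ρ : (n : ℕ) → (Fin n → A) → (Fin n → X) → ℝ)
    {m : ℕ} (a : Fin (m + 1) → A) (x : Fin (m + 1) → X) : ℝ :=
  ρ (m + 1) a x / ρ m (fun j => a j.castSucc) (fun j => x j.castSucc)

open Finset Real


/-- Sum over `Fin (m+1) → X` as a double sum over prefix and last element. -/
lemma sum_snoc {X : Type} [Fintype X] {m : ℕ} (f : (Fin (m + 1) → X) → ℝ) :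
    ∑ x : Fin (m + 1) → X, f x = ∑ p : Fin m → X, ∑ z : X, f (Fin.snoc p z) := by
  have hbij : Function.Bijective (fun pz : (Fin m → X) × X => (Fin.snoc pz.1 pz.2 : Fin (m + 1) → X)) := by
    constructor
    · rintro ⟨p, z⟩ ⟨p', z'⟩ h
      have h2 : (Fin.snoc p z : Fin (m + 1) → X) = Fin.snoc p' z' := h
      have h1 := fun j : Fin m => congrFun h2 j.castSucc
      have h3 := congrFun h2 (Fin.last m)
      simp only [Fin.snoc_castSucc, Fin.snoc_last] at h1 h3
      exact Prod.ext (funext h1) h3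
    · intro x
      exact ⟨(Fin.init x, x (Fin.last m)), Fin.snoc_init_self x⟩
  rw [← Fintype.sum_bijective _ hbij (fun pz : (Fin m → X) × X => f (Fin.snoc pz.1 pz.2 : Fin (m + 1) → X)) f
    (fun pz => rfl), Fintype.sum_prod_type]

/-- Log-sum inequality. -/
lemma log_sum {ι : Type*} (s : Finset ι) (y z : ι → ℝ)
    (hy : ∀ j ∈ s, 0 ≤ y j) (hz : ∀ j ∈ s, 0 ≤ z j)
    (hac : ∀ j ∈ s, z j = 0 → y j = 0) :
    (∑ j ∈ s, y j) * Real.log ((∑ j ∈ s, y j) / (∑ j ∈ s, z j)) ≤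
      ∑ j ∈ s, y j * Real.log (y j / z j) := by
  set Y := ∑ j ∈ s, y j with hY
  set Z := ∑ j ∈ s, z j with hZ
  rcases eq_or_lt_of_le (Finset.sum_nonneg hy) with h0 | hYpos'
  · -- Y = 0, all y j = 0
    have hy0 : ∀ j ∈ s, y j = 0 := by
      intro j hj
      exact (Finset.sum_eq_zero_iff_of_nonneg hy).1 h0.symm j hj
    have : Y = 0 := h0.symm
    rw [this]
    rw [Finset.sum_congr rfl (fun j hj => by rw [hy0 j hj, zero_mul])]
    simp
  · -- Y > 0
    have hYpos : 0 < Y := hYpos'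
    set t := s.filter (fun j => 0 < y j) with ht
    have hts : t ⊆ s := Finset.filter_subset _ _
    have hyt : ∀ j ∈ t, 0 < y j := fun j hj => (Finset.mem_filter.1 hj).2
    have hzt : ∀ j ∈ t, 0 < z j := by
      intro j hj
      rcases eq_or_lt_of_le (hz j (hts hj)) with h | h
      · exact absurd (hac j (hts hj) h.symm) (ne_of_gt (hyt j hj))
      · exact h
    have hYt : Y = ∑ j ∈ t, y j := by
      rw [hY, ← Finset.sum_filter_add_sum_filter_not s (fun j => 0 < y j)]
      have : ∑ j ∈ s.filter (fun j => ¬ 0 < y j), y j = 0 := by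
        apply Finset.sum_eq_zero
        intro j hj
        have hj' := Finset.mem_filter.1 hj
        exact le_antisymm (not_lt.1 hj'.2) (hy j hj'.1)
      rw [this, add_zero]
    have hZpos : 0 < Z := by
      obtain ⟨j, hj⟩ : t.Nonempty := by
        by_contra h
        rw [Finset.not_nonempty_iff_eq_empty] at h
        rw [hYt, h, Finset.sum_empty] at hYpos
        exact lt_irrefl _ hYpos
      calc 0 < z j := hzt j hj
        _ ≤ Z := Finset.single_le_sum hz (hts hj)
    have hZt : ∑ j ∈ t, z j ≤ Z := by
      rw [hZ]
      exact Finset.sum_le_sum_of_subset_of_nonneg hts (fun j hj _ => hz j hj)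
    -- restrict RHS to t
    have hRHS : ∑ j ∈ s, y j * Real.log (y j / z j) = ∑ j ∈ t, y j * Real.log (y j / z j) := by
      rw [← Finset.sum_filter_add_sum_filter_not s (fun j => 0 < y j)]
      have : ∑ j ∈ s.filter (fun j => ¬ 0 < y j), y j * Real.log (y j / z j) = 0 := by
        apply Finset.sum_eq_zero
        intro j hj
        have hj' := Finset.mem_filter.1 hj
        have : y j = 0 := le_antisymm (not_lt.1 hj'.2) (hy j hj'.1)
        rw [this, zero_mul]
      rw [this, add_zero]
    rw [hRHS]
    have key : ∀ j ∈ t, y j * Real.log (Y / Z) + (y j - z j * (Y / Z)) ≤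
        y j * Real.log (y j / z j) := by
      intro j hj
      have hyj := hyt j hj
      have hzj := hzt j hj
      have h1 : Real.log (y j / z j) - Real.log (Y / Z) = Real.log ((y j * Z) / (z j * Y)) := by
        have e1 : Real.log (y j / z j) = Real.log (y j) - Real.log (z j) :=
          Real.log_div (ne_of_gt hyj) (ne_of_gt hzj)
        have e2 : Real.log (Y / Z) = Real.log Y - Real.log Z :=
          Real.log_div (ne_of_gt hYpos) (ne_of_gt hZpos)
        have e3 : Real.log ((y j * Z) / (z j * Y)) =
            Real.log (y j) + Real.log Z - (Real.log (z j) + Real.log Y) := by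
          rw [Real.log_div (ne_of_gt (by positivity)) (ne_of_gt (by positivity)),
            Real.log_mul (ne_of_gt hyj) (ne_of_gt hZpos),
            Real.log_mul (ne_of_gt hzj) (ne_of_gt hYpos)]
        rw [e1, e2, e3]
        ring
      have h2 : Real.log ((z j * Y) / (y j * Z)) ≤ (z j * Y) / (y j * Z) - 1 :=
        Real.log_le_sub_one_of_pos (by positivity)
      have h3 : Real.log ((y j * Z) / (z j * Y)) = - Real.log ((z j * Y) / (y j * Z)) := by
        rw [← Real.log_inv]
        congr 1
        rw [inv_div]
      have h4 : 1 - (z j * Y) / (y j * Z) ≤ Real.log (y j / z j) - Real.log (Y / Z) := by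
        rw [h1, h3]; linarith
      have h5 : y j * (1 - (z j * Y) / (y j * Z)) = y j - z j * (Y / Z) := by
        field_simp
      nlinarith [mul_le_mul_of_nonneg_left h4 (le_of_lt hyj)]
    calc Y * Real.log (Y / Z)
        ≤ ∑ j ∈ t, (y j * Real.log (Y / Z) + (y j - z j * (Y / Z))) := by
          rw [Finset.sum_add_distrib, ← Finset.sum_mul, ← hYt, Finset.sum_sub_distrib, ← hYt,
            ← Finset.sum_mul]
          have h6 : (∑ j ∈ t, z j) * (Y / Z) ≤ Z * (Y / Z) :=
            mul_le_mul_of_nonneg_right hZt (le_of_lt (div_pos hYpos hZpos))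
          have hZY : Z * (Y / Z) = Y := by field_simp
          linarith
      _ ≤ ∑ j ∈ t, y j * Real.log (y j / z j) := Finset.sum_le_sum key



lemma psi_mono {q t : ℝ} (hq : 0 < q) (ht : t < 1) (hqt : q ≤ t) :
    Real.log q - Real.log (1 - q) - 4 * q ≤ Real.log t - Real.log (1 - t) - 4 * t := by
  set ψ : ℝ → ℝ := fun u => Real.log u - Real.log (1 - u) - 4 * u with hψ
  have hmono : MonotoneOn ψ (Set.Icc q t) := by
    apply monotoneOn_of_deriv_nonneg (convex_Icc q t)
    · apply ContinuousOn.sub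
      apply ContinuousOn.sub
      · apply Real.continuousOn_log.comp continuous_id.continuousOn
        intro u hu
        exact ne_of_gt (lt_of_lt_of_le hq hu.1)
      · apply Real.continuousOn_log.comp (continuous_const.sub continuous_id).continuousOn
        intro u hu
        have : u < 1 := lt_of_le_of_lt hu.2 ht
        simp only [Set.mem_compl_iff, Set.mem_singleton_iff]
        intro hc
        simp only [Pi.sub_apply, id] at hc
        linarith
      · exact (continuous_const.mul continuous_id).continuousOn
    · intro u hu
      rw [interior_Icc] at hu
      have hu0 : 0 < u := lt_trans hq hu.1
      have hu1 : u < 1 := lt_trans hu.2 ht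
      have hd : HasDerivAt ψ (1 / u - (-1) / (1 - u) - 4) u := by
        apply HasDerivAt.sub
        apply HasDerivAt.sub
        · simpa using Real.hasDerivAt_log (ne_of_gt hu0)
        · have h1 : HasDerivAt (fun u : ℝ => 1 - u) (-1) u := by
            simpa using (hasDerivAt_id u).const_sub 1
          have := (Real.hasDerivAt_log (by linarith : (1 : ℝ) - u ≠ 0)).comp u h1
          simpa [div_eq_mul_inv, Function.comp_def] using this
        · simpa using (hasDerivAt_id u).const_mul (4 : ℝ)
      exact hd.differentiableAt.differentiableWithinAt
    · intro u hu
      rw [interior_Icc] at hu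
      have hu0 : 0 < u := lt_trans hq hu.1
      have hu1 : u < 1 := lt_trans hu.2 ht
      have hd : HasDerivAt ψ (1 / u - (-1) / (1 - u) - 4) u := by
        apply HasDerivAt.sub
        apply HasDerivAt.sub
        · simpa using Real.hasDerivAt_log (ne_of_gt hu0)
        · have h1 : HasDerivAt (fun u : ℝ => 1 - u) (-1) u := by
            simpa using (hasDerivAt_id u).const_sub 1
          have := (Real.hasDerivAt_log (by linarith : (1 : ℝ) - u ≠ 0)).comp u h1
          simpa [div_eq_mul_inv, Function.comp_def] using this
        · simpa using (hasDerivAt_id u).const_mul (4 : ℝ)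
      rw [hd.deriv]
      have hne1 : u ≠ 0 := ne_of_gt hu0
      have hne2 : (1 : ℝ) - u ≠ 0 := by linarith
      have hne3 : u * (1 - u) ≠ 0 := by positivity
      have key : 1 / u - (-1) / (1 - u) - 4 = (1 - 2 * u) ^ 2 / (u * (1 - u)) := by
        rw [eq_div_iff hne3]
        field_simp
        ring
      rw [key]
      exact div_nonneg (sq_nonneg _) (le_of_lt (by nlinarith))
  exact hmono ⟨le_refl q, hqt⟩ ⟨hqt, le_refl t⟩ hqt

lemma binary_pinsker {p q : ℝ} (hq0 : 0 < q) (hqp : q ≤ p) (hp1 : p ≤ 1) (hq1 : q < 1) :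
    2 * (p - q) ^ 2 ≤ p * Real.log (p / q) + (1 - p) * Real.log ((1 - p) / (1 - q)) := by
  set g : ℝ → ℝ := fun t => t * Real.log t - t * Real.log q + (1 - t) * Real.log (1 - t)
    - (1 - t) * Real.log (1 - q) - 2 * (t - q) ^ 2 with hg
  have hgq : g q = 0 := by simp only [hg]; ring
  have hmono : MonotoneOn g (Set.Icc q 1) := by
    apply monotoneOn_of_deriv_nonneg (convex_Icc q 1)
    · apply ContinuousOn.sub
      apply ContinuousOn.sub
      apply ContinuousOn.add
      apply ContinuousOn.sub
      · exact Real.continuous_mul_log.continuousOn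
      · exact (continuous_id.mul continuous_const).continuousOn
      · exact (Real.continuous_mul_log.comp (continuous_const.sub continuous_id)).continuousOn
      · exact ((continuous_const.sub continuous_id).mul continuous_const).continuousOn
      · exact (continuous_const.mul ((continuous_id.sub continuous_const).pow 2)).continuousOn
    · intro t htI
      rw [interior_Icc] at htI
      obtain ⟨ht0, ht1⟩ := htI
      have ht0' : 0 < t := lt_trans hq0 ht0
      exact (((Real.hasDerivAt_mul_log (ne_of_gt ht0')).sub
        (hasDerivAt_mul_const (Real.log q))).add
        ((Real.hasDerivAt_mul_log (by linarith : (1:ℝ) - t ≠ 0)).comp t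
          (by simpa using (hasDerivAt_id t).const_sub 1))
        |>.sub (((hasDerivAt_id t).const_sub 1).mul_const (Real.log (1 - q)))
        |>.sub ((((hasDerivAt_id t).sub_const q).pow 2).const_mul 2)).differentiableAt.differentiableWithinAt
    · intro t htI
      rw [interior_Icc] at htI
      obtain ⟨ht0, ht1⟩ := htI
      have ht0' : 0 < t := lt_trans hq0 ht0
      have hd : HasDerivAt g ((Real.log t + 1 - Real.log q) + (Real.log (1 - t) + 1) * (-1)
          - (-1) * Real.log (1 - q) - 2 * (2 * (t - q) ^ 1 * 1)) t := by
        exact (((Real.hasDerivAt_mul_log (ne_of_gt ht0')).sub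
          (hasDerivAt_mul_const (Real.log q))).add
          ((Real.hasDerivAt_mul_log (by linarith : (1:ℝ) - t ≠ 0)).comp t
            (by simpa using (hasDerivAt_id t).const_sub 1))
          |>.sub (((hasDerivAt_id t).const_sub 1).mul_const (Real.log (1 - q)))
          |>.sub ((((hasDerivAt_id t).sub_const q).pow 2).const_mul 2))
      rw [hd.deriv]
      have := psi_mono hq0 ht1 (le_of_lt ht0)
      nlinarith [this]
  have h1 : g q ≤ g p := hmono ⟨le_refl q, le_of_lt hq1⟩ ⟨hqp, hp1⟩ hqp
  have hp0 : 0 < p := lt_of_lt_of_le hq0 hqp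
  have e1 : p * Real.log (p / q) = p * Real.log p - p * Real.log q := by
    rw [Real.log_div (ne_of_gt hp0) (ne_of_gt hq0)]; ring
  have e2 : (1 - p) * Real.log ((1 - p) / (1 - q)) =
      (1 - p) * Real.log (1 - p) - (1 - p) * Real.log (1 - q) := by
    rcases eq_or_lt_of_le hp1 with h | h
    · rw [h]; simp
    · rw [Real.log_div (by linarith : (1:ℝ) - p ≠ 0) (by linarith : (1:ℝ) - q ≠ 0)]; ring
  rw [hgq] at h1
  simp only [hg] at h1
  linarith [h1]

/-- Hutter's entropy inequality: squared euclidean distance between probability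
vectors is bounded by the KL divergence. -/
lemma entropy_ineq {ι : Type*} [Fintype ι] (y z : ι → ℝ)
    (hy0 : ∀ j, 0 ≤ y j) (hz0 : ∀ j, 0 ≤ z j)
    (hy1 : ∑ j, y j = 1) (hz1 : ∑ j, z j = 1)
    (hac : ∀ j, z j = 0 → y j = 0) :
    ∑ j, (y j - z j) ^ 2 ≤ ∑ j, y j * Real.log (y j / z j) := by
  set A : Finset ι := Finset.univ.filter (fun j => z j < y j) with hA
  set p : ℝ := ∑ j ∈ A, y j with hp
  set q : ℝ := ∑ j ∈ A, z j with hq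
  have hqlep : q ≤ p :=
    Finset.sum_le_sum (fun j hj => le_of_lt (Finset.mem_filter.1 hj).2)
  have hq0 : 0 ≤ q := Finset.sum_nonneg (fun j _ => hz0 j)
  have hp1 : p ≤ 1 := by
    rw [← hy1]
    exact Finset.sum_le_sum_of_subset_of_nonneg (Finset.filter_subset _ _) (fun j _ _ => hy0 j)
  have hAc_y : ∑ j ∈ Finset.univ.filter (fun j => ¬ z j < y j), y j = 1 - p := by
    have := Finset.sum_filter_add_sum_filter_not Finset.univ (fun j => z j < y j) y
    rw [hy1] at this  -- careful
    linarith [this]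
  have hAc_z : ∑ j ∈ Finset.univ.filter (fun j => ¬ z j < y j), z j = 1 - q := by
    have := Finset.sum_filter_add_sum_filter_not Finset.univ (fun j => z j < y j) z
    rw [hz1] at this
    linarith [this]
  -- pointwise bound |y j - z j| ≤ p - q
  have hbd : ∀ j, |y j - z j| ≤ p - q := by
    intro j
    by_cases hj : z j < y j
    · rw [abs_of_pos (by linarith)]
      have hjA : j ∈ A := Finset.mem_filter.2 ⟨Finset.mem_univ j, hj⟩
      have : y j - z j ≤ ∑ j' ∈ A, (y j' - z j') :=
        Finset.single_le_sum (f := fun j' => y j' - z j')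
          (fun j' hj' => sub_nonneg.2 (le_of_lt (Finset.mem_filter.1 hj').2)) hjA
      rw [Finset.sum_sub_distrib] at this
      linarith
    · rw [abs_of_nonpos (by linarith [not_lt.1 hj])]
      have hjA : j ∈ Finset.univ.filter (fun j => ¬ z j < y j) :=
        Finset.mem_filter.2 ⟨Finset.mem_univ j, hj⟩
      have : z j - y j ≤ ∑ j' ∈ Finset.univ.filter (fun j => ¬ z j < y j), (z j' - y j') :=
        Finset.single_le_sum (f := fun j' => z j' - y j')
          (fun j' hj' => sub_nonneg.2 (not_lt.1 (Finset.mem_filter.1 hj').2)) hjA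
      rw [Finset.sum_sub_distrib, hAc_y, hAc_z] at this
      linarith
  -- LHS ≤ 2 (p-q)^2
  have hTV : ∑ j, |y j - z j| = 2 * (p - q) := by
    rw [← Finset.sum_filter_add_sum_filter_not Finset.univ (fun j => z j < y j) (fun j => |y j - z j|)]
    have e1 : ∑ j ∈ A, |y j - z j| = p - q := by
      rw [hp, hq, ← Finset.sum_sub_distrib]
      apply Finset.sum_congr rfl
      intro j hj
      rw [abs_of_pos (by linarith [(Finset.mem_filter.1 hj).2])]
    have e2 : ∑ j ∈ Finset.univ.filter (fun j => ¬ z j < y j), |y j - z j| = p - q := by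
      have : ∑ j ∈ Finset.univ.filter (fun j => ¬ z j < y j), |y j - z j|
          = ∑ j ∈ Finset.univ.filter (fun j => ¬ z j < y j), (z j - y j) := by
        apply Finset.sum_congr rfl
        intro j hj
        rw [abs_of_nonpos (by linarith [not_lt.1 (Finset.mem_filter.1 hj).2])]
        ring
      rw [this, Finset.sum_sub_distrib, hAc_y, hAc_z]
      ring
    rw [e1, e2]
    ring
  have hLHS : ∑ j, (y j - z j) ^ 2 ≤ 2 * (p - q) ^ 2 := by
    calc ∑ j, (y j - z j) ^ 2 = ∑ j, |y j - z j| * |y j - z j| := by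
          apply Finset.sum_congr rfl
          intro j _
          rw [← sq_abs, pow_two]
      _ ≤ ∑ j, |y j - z j| * (p - q) := by
          apply Finset.sum_le_sum
          intro j _
          exact mul_le_mul_of_nonneg_left (hbd j) (abs_nonneg _)
      _ = 2 * (p - q) ^ 2 := by rw [← Finset.sum_mul, hTV]; ring
  rcases eq_or_lt_of_le hqlep with heq | hlt
  · -- p = q forces y = z
    have hA_empty : ∀ j ∈ A, False := by
      intro j hj
      have h1 : ∀ j' ∈ A, 0 ≤ y j' - z j' :=
        fun j' hj' => by linarith [(Finset.mem_filter.1 hj').2]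
      have h2 : ∑ j' ∈ A, (y j' - z j') = 0 := by
        rw [Finset.sum_sub_distrib]; rw [← hp, ← hq]; linarith
      have h3 := (Finset.sum_eq_zero_iff_of_nonneg h1).1 h2 j hj
      have := (Finset.mem_filter.1 hj).2
      linarith
    have hyz : ∀ j, y j = z j := by
      intro j
      by_contra hne
      have hle : ∀ j, y j ≤ z j := by
        intro j'
        by_contra h
        exact hA_empty j' (Finset.mem_filter.2 ⟨Finset.mem_univ j', not_le.1 h⟩)
      have hstrict : y j < z j := lt_of_le_of_ne (hle j) hne
      have : ∑ j', y j' < ∑ j', z j' :=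
        Finset.sum_lt_sum (fun j' _ => hle j') ⟨j, Finset.mem_univ j, hstrict⟩
      rw [hy1, hz1] at this
      exact lt_irrefl _ this
    have : ∑ j, (y j - z j) ^ 2 = 0 := Finset.sum_eq_zero (fun j _ => by rw [hyz j]; ring)
    rw [this]
    apply Finset.sum_nonneg
    intro j _
    rw [hyz j]
    rcases eq_or_lt_of_le (hz0 j) with h | h
    · rw [← h]; simp
    · rw [div_self (ne_of_gt h), Real.log_one, mul_zero]
  · -- q < p
    have hq0' : 0 < q := by
      rcases eq_or_lt_of_le hq0 with h | h
      · exfalso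
        have hz_zero : ∀ j ∈ A, z j = 0 := by
          intro j hj
          exact le_antisymm (by
            have := (Finset.sum_eq_zero_iff_of_nonneg (fun j' _ => hz0 j')).1 h.symm j hj
            linarith [this.le]) (hz0 j)
        have hy_zero : ∀ j ∈ A, y j = 0 := fun j hj => hac j (hz_zero j hj)
        have hp0 : p = 0 := Finset.sum_eq_zero hy_zero
        rw [hp0] at hlt
        linarith
      · exact h
    have hq1 : q < 1 := lt_of_lt_of_le hlt hp1
    have hbin := binary_pinsker hq0' hqlep hp1 hq1
    -- log-sum on A and Aᶜ
    have hls1 : p * Real.log (p / q) ≤ ∑ j ∈ A, y j * Real.log (y j / z j) := by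
      have := log_sum A y z (fun j _ => hy0 j) (fun j _ => hz0 j) (fun j _ h => hac j h)
      rw [← hp, ← hq] at this
      exact this
    have hls2 : (1 - p) * Real.log ((1 - p) / (1 - q)) ≤
        ∑ j ∈ Finset.univ.filter (fun j => ¬ z j < y j), y j * Real.log (y j / z j) := by
      have := log_sum (Finset.univ.filter (fun j => ¬ z j < y j)) y z
        (fun j _ => hy0 j) (fun j _ => hz0 j) (fun j _ h => hac j h)
      rw [hAc_y, hAc_z] at this
      exact this
    have hsplit : ∑ j, y j * Real.log (y j / z j) =
        (∑ j ∈ A, y j * Real.log (y j / z j)) +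
        ∑ j ∈ Finset.univ.filter (fun j => ¬ z j < y j), y j * Real.log (y j / z j) :=
      (Finset.sum_filter_add_sum_filter_not Finset.univ (fun j => z j < y j) _).symm
    rw [hsplit]
    linarith



section Env

variable {X A : Type} [Fintype X]

/-- Positive probability prefixes have positive probability extensions. -/
lemma ext_pos (ν : (n : ℕ) → (Fin n → A) → (Fin n → X) → ℝ)
    (hnn : ∀ n a x, 0 ≤ ν n a x)
    (hchr : ∀ n (a : Fin (n + 1) → A) (x : Fin n → X),
        ∑ z : X, ν (n + 1) a (Fin.snoc x z) = ν n (fun j => a j.castSucc) x)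
    (b : ℕ → A) {m n : ℕ} (hmn : m ≤ n) (x : Fin m → X)
    (hx : 0 < ν m (fun j => b j.val) x) :
    ∃ y : Fin n → X, (∀ j : Fin m, y (Fin.castLE hmn j) = x j) ∧
      0 < ν n (fun j => b j.val) y := by
  induction n, hmn using Nat.le_induction with
  | base => exact ⟨x, fun j => congrArg x (Fin.ext rfl), hx⟩
  | succ n hn IH =>
    obtain ⟨y, hy1, hy2⟩ := IH
    have hch := hchr n (fun j : Fin (n + 1) => b j.val) y
    have heq : (fun j : Fin n => b ((Fin.castSucc j) : Fin (n + 1)).val) = fun j : Fin n => b j.val :=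
      funext fun j => rfl
    rw [heq] at hch
    have hpos : 0 < ∑ z : X, ν (n + 1) (fun j => b j.val) (Fin.snoc y z) := by
      rw [hch]; exact hy2
    obtain ⟨z, _, hz⟩ := Finset.exists_lt_of_sum_lt (f := fun _ : X => (0 : ℝ))
      (by simpa using hpos)
    refine ⟨Fin.snoc y z, ?_, hz⟩
    intro j
    have : (Fin.castLE (le_trans hn (Nat.le_succ n)) j : Fin (n + 1)) =
        Fin.castSucc (Fin.castLE hn j) := Fin.ext rfl
    rw [this, Fin.snoc_castSucc, hy1]

/-- Positive probability sequences have positive probability prefixes. -/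
lemma restrict_pos (ν : (n : ℕ) → (Fin n → A) → (Fin n → X) → ℝ)
    (hnn : ∀ n a x, 0 ≤ ν n a x)
    (hchr : ∀ n (a : Fin (n + 1) → A) (x : Fin n → X),
        ∑ z : X, ν (n + 1) a (Fin.snoc x z) = ν n (fun j => a j.castSucc) x)
    (b : ℕ → A) {m n : ℕ} (hmn : m ≤ n) :
    ∀ y : Fin n → X, 0 < ν n (fun j => b j.val) y →
      0 < ν m (fun j => b j.val) (fun j => y (Fin.castLE hmn j)) := by
  induction n, hmn using Nat.le_induction with
  | base =>
    intro y hy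
    have : (fun j : Fin m => y (Fin.castLE (le_refl m) j)) = y :=
      funext fun j => congrArg y (Fin.ext rfl)
    rw [this]
    exact hy
  | succ n hn IH =>
    intro y hy
    have hch := hchr n (fun j : Fin (n + 1) => b j.val) (fun j => y j.castSucc)
    have heq : (fun j : Fin n => b ((Fin.castSucc j) : Fin (n + 1)).val) = fun j : Fin n => b j.val :=
      funext fun j => rfl
    rw [heq] at hch
    have hsnoc : (Fin.snoc (fun j : Fin n => y j.castSucc) (y (Fin.last n)) : Fin (n + 1) → X) = y :=
      Fin.snoc_init_self y
    have hle : ν (n + 1) (fun j => b j.val) y ≤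
        ∑ z : X, ν (n + 1) (fun j => b j.val) (Fin.snoc (fun j : Fin n => y j.castSucc) z) := by
      have := Finset.single_le_sum
        (f := fun z : X => ν (n + 1) (fun j => b j.val) (Fin.snoc (fun j : Fin n => y j.castSucc) z))
        (fun z _ => hnn _ _ _) (Finset.mem_univ (y (Fin.last n)))
      rwa [hsnoc] at this
    have hres : 0 < ν n (fun j => b j.val) (fun j => y j.castSucc) := by
      rw [← hch]
      exact lt_of_lt_of_le hy hle
    have := IH (fun j => y j.castSucc) hres
    have heq2 : (fun j : Fin m => y ((Fin.castLE hn j).castSucc)) =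
        fun j : Fin m => y (Fin.castLE (le_trans hn (Nat.le_succ n)) j) :=
      funext fun j => congrArg y (Fin.ext rfl)
    rw [heq2] at this
    exact this

end Env

lemma heart {X A : Type} [Fintype X]
    (μ ξ : (n : ℕ) → (Fin n → A) → (Fin n → X) → ℝ)
    (hμnn : ∀ n a x, 0 ≤ μ n a x)
    (hμchr : ∀ n (a : Fin (n + 1) → A) (x : Fin n → X),
        ∑ z : X, μ (n + 1) a (Fin.snoc x z) = μ n (fun j => a j.castSucc) x)
    (hξnn : ∀ n a x, 0 ≤ ξ n a x)
    (hξchr : ∀ n (a : Fin (n + 1) → A) (x : Fin n → X),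
        ∑ z : X, ξ (n + 1) a (Fin.snoc x z) = ξ n (fun j => a j.castSucc) x)
    (b : ℕ → A) (n m : ℕ) (hm : m + 1 ≤ n)
    (hpos : ∀ (m' : ℕ), m' ≤ n → ∀ x : Fin m' → X,
        0 < μ m' (fun j => b j.val) x → 0 < ξ m' (fun j => b j.val) x) :
    (∑ x : Fin (m + 1) → X, μ m (fun j => b j.val) (fun j => x j.castSucc) *
        (cond μ (fun j => b j.val) x - cond ξ (fun j => b j.val) x) ^ 2)
      + ∑ x : Fin m → X, μ m (fun j => b j.val) x *
          Real.log (μ m (fun j => b j.val) x / ξ m (fun j => b j.val) x)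
      ≤ ∑ x : Fin (m + 1) → X, μ (m + 1) (fun j => b j.val) x *
          Real.log (μ (m + 1) (fun j => b j.val) x / ξ (m + 1) (fun j => b j.val) x) := by
  rw [sum_snoc (f := fun x : Fin (m + 1) → X => μ m (fun j => b j.val) (fun j => x j.castSucc) *
        (cond μ (fun j => b j.val) x - cond ξ (fun j => b j.val) x) ^ 2),
     sum_snoc (f := fun x : Fin (m + 1) → X => μ (m + 1) (fun j => b j.val) x *
          Real.log (μ (m + 1) (fun j => b j.val) x / ξ (m + 1) (fun j => b j.val) x))]
  rw [← Finset.sum_add_distrib]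
  apply Finset.sum_le_sum
  intro p _
  simp only [cond, Fin.snoc_castSucc, Fin.coe_castSucc]
  show (∑ z : X, μ m (fun j => b j.val) p *
          (μ (m + 1) (fun j => b j.val) (Fin.snoc p z) / μ m (fun j => b j.val) p -
            ξ (m + 1) (fun j => b j.val) (Fin.snoc p z) / ξ m (fun j => b j.val) p) ^ 2)
      + μ m (fun j => b j.val) p *
          Real.log (μ m (fun j => b j.val) p / ξ m (fun j => b j.val) p)
      ≤ ∑ z : X, μ (m + 1) (fun j => b j.val) (Fin.snoc p z) *
          Real.log (μ (m + 1) (fun j => b j.val) (Fin.snoc p z) /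
            ξ (m + 1) (fun j => b j.val) (Fin.snoc p z))
  have heqa : (fun j : Fin m => b ((Fin.castSucc j) : Fin (m + 1)).val) = fun j : Fin m => b j.val :=
    funext fun j => rfl
  have hchM : ∑ z : X, μ (m + 1) (fun j => b j.val) (Fin.snoc p z) = μ m (fun j => b j.val) p := by
    have := hμchr m (fun j : Fin (m + 1) => b j.val) p
    rwa [heqa] at this
  have hchXi : ∑ z : X, ξ (m + 1) (fun j => b j.val) (Fin.snoc p z) = ξ m (fun j => b j.val) p := by
    have := hξchr m (fun j : Fin (m + 1) => b j.val) p
    rwa [heqa] at this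
  by_cases hM : 0 < μ m (fun j => b j.val) p
  case neg =>
    have hM0 : μ m (fun j => b j.val) p = 0 := le_antisymm (not_lt.1 hM) (hμnn _ _ _)
    have hz0 : ∀ z : X, μ (m + 1) (fun j => b j.val) (Fin.snoc p z) = 0 := by
      intro z
      refine (Finset.sum_eq_zero_iff_of_nonneg (fun z _ => hμnn _ _ _)).1 ?_ z (Finset.mem_univ z)
      rw [hchM, hM0]
    simp [hM0, hz0]
  case pos =>
    have hΞ : 0 < ξ m (fun j => b j.val) p := hpos m (Nat.le_of_succ_le hm) p hM
    have hMzXz : ∀ z : X, 0 < μ (m + 1) (fun j => b j.val) (Fin.snoc p z) →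
        0 < ξ (m + 1) (fun j => b j.val) (Fin.snoc p z) :=
      fun z h => hpos (m + 1) hm _ h
    set M := μ m (fun j => b j.val) p with hMdef
    set Xi := ξ m (fun j => b j.val) p with hXidef
    set Mz := fun z : X => μ (m + 1) (fun j => b j.val) (Fin.snoc p z) with hMzdef
    set Xz := fun z : X => ξ (m + 1) (fun j => b j.val) (Fin.snoc p z) with hXzdef
    have hMznn : ∀ z, 0 ≤ Mz z := fun z => hμnn _ _ _
    have hXznn : ∀ z, 0 ≤ Xz z := fun z => hξnn _ _ _
    have hEnt := entropy_ineq (fun z => Mz z / M) (fun z => Xz z / Xi)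
      (fun z => div_nonneg (hMznn z) (le_of_lt hM))
      (fun z => div_nonneg (hXznn z) (le_of_lt hΞ))
      (by rw [← Finset.sum_div, hchM, div_self (ne_of_gt hM)])
      (by rw [← Finset.sum_div, hchXi, div_self (ne_of_gt hΞ)])
      (by
        intro z hz
        have hXz0 : ¬ 0 < Mz z := by
          intro h
          have := div_pos (hMzXz z h) hΞ
          rw [hz] at this
          exact lt_irrefl _ this
        rw [le_antisymm (not_lt.1 hXz0) (hMznn z), zero_div])
    have hmul := mul_le_mul_of_nonneg_left hEnt (le_of_lt hM)
    have e1 : ∑ z : X, M * (Mz z / M - Xz z / Xi) ^ 2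
        = M * ∑ z : X, (Mz z / M - Xz z / Xi) ^ 2 := (Finset.mul_sum _ _ _).symm
    have key : M * ∑ z : X, (Mz z / M) * Real.log ((Mz z / M) / (Xz z / Xi))
        = (∑ z : X, Mz z * Real.log (Mz z / Xz z)) - M * Real.log (M / Xi) := by
      rw [Finset.mul_sum]
      have per : ∀ z : X, M * ((Mz z / M) * Real.log ((Mz z / M) / (Xz z / Xi)))
          = Mz z * Real.log (Mz z / Xz z) - Mz z * Real.log (M / Xi) := by
        intro z
        by_cases hz : 0 < Mz z
        · have hXz := hMzXz z hz
          have e0 : M * ((Mz z / M) * Real.log ((Mz z / M) / (Xz z / Xi)))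
              = Mz z * Real.log ((Mz z / M) / (Xz z / Xi)) := by
            field_simp
          rw [e0]
          have elog : Real.log ((Mz z / M) / (Xz z / Xi))
              = Real.log (Mz z / Xz z) - Real.log (M / Xi) := by
            rw [Real.log_div (ne_of_gt (div_pos hz hM)) (ne_of_gt (div_pos hXz hΞ)),
              Real.log_div (ne_of_gt hz) (ne_of_gt hM),
              Real.log_div (ne_of_gt hXz) (ne_of_gt hΞ),
              Real.log_div (ne_of_gt hz) (ne_of_gt hXz),
              Real.log_div (ne_of_gt hM) (ne_of_gt hΞ)]
            ring
          rw [elog]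
          ring
        · have hz0 : Mz z = 0 := le_antisymm (not_lt.1 hz) (hMznn z)
          rw [hz0]
          simp
      rw [Finset.sum_congr rfl (fun z _ => per z), Finset.sum_sub_distrib,
        ← Finset.sum_mul, hchM]
    have hgoal : ∑ z : X, μ (m + 1) (fun j => b j.val) (Fin.snoc p z) *
          Real.log (μ (m + 1) (fun j => b j.val) (Fin.snoc p z) /
            ξ (m + 1) (fun j => b j.val) (Fin.snoc p z))
        = ∑ z : X, Mz z * Real.log (Mz z / Xz z) := rfl
    rw [e1, hgoal]
    linarith [hmul, key]

/-- The core real-valued inequality. -/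
lemma core {X A I : Type} [Fintype X] [Fintype I]
    (ρ : I → (n : ℕ) → (Fin n → A) → (Fin n → X) → ℝ)
    (hρnn : ∀ i n a x, 0 ≤ ρ i n a x)
    (hρsum : ∀ i n a, ∑ x : Fin n → X, ρ i n a x = 1)
    (hρchr : ∀ i n (a : Fin (n + 1) → A) (x : Fin n → X),
        ∑ z : X, ρ i (n + 1) a (Fin.snoc x z) = ρ i n (fun j => a j.castSucc) x)
    (w : I → ℝ) (hw0 : ∀ i, 0 < w i) (hws : ∑ i, w i = 1)
    (μ : (n : ℕ) → (Fin n → A) → (Fin n → X) → ℝ)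
    (hμnn : ∀ n a x, 0 ≤ μ n a x)
    (hμsum : ∀ n a, ∑ x : Fin n → X, μ n a x = 1)
    (hμchr : ∀ n (a : Fin (n + 1) → A) (x : Fin n → X),
        ∑ z : X, μ (n + 1) a (Fin.snoc x z) = μ n (fun j => a j.castSucc) x)
    (i : I) (n : ℕ) (b : ℕ → A)
    (hac : ∀ x : Fin n → X, 0 < μ n (fun j => b j.val) x → 0 < ρ i n (fun j => b j.val) x) :
    ∑ k ∈ Finset.range n, ∑ x : Fin (k + 1) → X,
        μ k (fun j => b j.val) (fun j => x j.castSucc) *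
          (cond μ (fun j => b j.val) x -
            cond (fun m a' x' => ∑ i', w i' * ρ i' m a' x') (fun j => b j.val) x) ^ 2
      ≤ Real.log (1 / w i) +
        ∑ x : Fin n → X, μ n (fun j => b j.val) x *
          Real.log (μ n (fun j => b j.val) x / ρ i n (fun j => b j.val) x) := by
  set ξ : (m : ℕ) → (Fin m → A) → (Fin m → X) → ℝ :=
    fun m a' x' => ∑ i', w i' * ρ i' m a' x' with hξdef
  have hξnn : ∀ m a x, 0 ≤ ξ m a x :=
    fun m a x => Finset.sum_nonneg fun i' _ => mul_nonneg (le_of_lt (hw0 i')) (hρnn i' m a x)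
  have hξchr : ∀ m (a : Fin (m + 1) → A) (x : Fin m → X),
      ∑ z : X, ξ (m + 1) a (Fin.snoc x z) = ξ m (fun j => a j.castSucc) x := by
    intro m a x
    rw [hξdef]
    dsimp only
    rw [Finset.sum_comm]
    exact Finset.sum_congr rfl fun i' _ => by rw [← Finset.mul_sum, hρchr]
  have hξsum : ∀ m a, ∑ x : Fin m → X, ξ m a x = 1 := by
    intro m a
    rw [hξdef]
    dsimp only
    rw [Finset.sum_comm]
    rw [Finset.sum_congr rfl fun i' (_ : i' ∈ Finset.univ) => by
      rw [← Finset.mul_sum, hρsum i' m a, mul_one]]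
    exact hws
  have hξdom : ∀ m (a : Fin m → A) x, w i * ρ i m a x ≤ ξ m a x := fun m a x =>
    Finset.single_le_sum (fun i' _ => mul_nonneg (le_of_lt (hw0 i')) (hρnn i' m a x))
      (Finset.mem_univ i)
  have hacξ : ∀ x : Fin n → X, 0 < μ n (fun j => b j.val) x → 0 < ξ n (fun j => b j.val) x :=
    fun x h => lt_of_lt_of_le (mul_pos (hw0 i) (hac x h)) (hξdom n _ x)
  have hpos : ∀ (m' : ℕ), m' ≤ n → ∀ x : Fin m' → X,
      0 < μ m' (fun j => b j.val) x → 0 < ξ m' (fun j => b j.val) x := by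
    intro m' hm' x hx
    obtain ⟨y, hy1, hy2⟩ := ext_pos μ hμnn hμchr b hm' x hx
    have hres := restrict_pos ξ hξnn hξchr b hm' y (hacξ y hy2)
    have hxy : (fun j => y (Fin.castLE hm' j)) = x := funext hy1
    rwa [hxy] at hres
  haveI : Subsingleton (Fin 0 → X) := ⟨fun f g => funext fun j => j.elim0⟩
  have hD0 : ∑ x : Fin 0 → X, μ 0 (fun j => b j.val) x *
      Real.log (μ 0 (fun j => b j.val) x / ξ 0 (fun j => b j.val) x) = 0 := by
    have hone : ∀ x : Fin 0 → X, μ 0 (fun j => b j.val) x = 1 := by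
      intro x
      have h := hμsum 0 (fun j => b j.val)
      rwa [Fintype.sum_subsingleton _ x] at h
    have honeξ : ∀ x : Fin 0 → X, ξ 0 (fun j => b j.val) x = 1 := by
      intro x
      have h := hξsum 0 (fun j => b j.val)
      rwa [Fintype.sum_subsingleton _ x] at h
    apply Finset.sum_eq_zero
    intro x _
    rw [hone x, honeξ x, div_self one_ne_zero, Real.log_one, mul_zero]
  have hmain : ∀ m, m ≤ n →
      (∑ k ∈ Finset.range m, ∑ x : Fin (k + 1) → X,
        μ k (fun j => b j.val) (fun j => x j.castSucc) *
          (cond μ (fun j => b j.val) x - cond ξ (fun j => b j.val) x) ^ 2)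
      ≤ ∑ x : Fin m → X, μ m (fun j => b j.val) x *
          Real.log (μ m (fun j => b j.val) x / ξ m (fun j => b j.val) x) := by
    intro m
    induction m with
    | zero =>
      intro _
      rw [Finset.sum_range_zero, hD0]
    | succ m IH =>
      intro hm1
      rw [Finset.sum_range_succ]
      have h1 := IH (le_trans (Nat.le_succ m) hm1)
      have h2 := heart μ ξ hμnn hμchr hξnn hξchr b n m hm1 hpos
      linarith
  have hfinal : (∑ x : Fin n → X, μ n (fun j => b j.val) x *
        Real.log (μ n (fun j => b j.val) x / ξ n (fun j => b j.val) x))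
      ≤ Real.log (1 / w i) +
        ∑ x : Fin n → X, μ n (fun j => b j.val) x *
          Real.log (μ n (fun j => b j.val) x / ρ i n (fun j => b j.val) x) := by
    have per : ∀ x : Fin n → X, μ n (fun j => b j.val) x *
        Real.log (μ n (fun j => b j.val) x / ξ n (fun j => b j.val) x)
        ≤ μ n (fun j => b j.val) x * Real.log (1 / w i) +
          μ n (fun j => b j.val) x *
            Real.log (μ n (fun j => b j.val) x / ρ i n (fun j => b j.val) x) := by
      intro x
      by_cases hx : 0 < μ n (fun j => b j.val) x
      · have hr := hac x hx
        have hwr : 0 < w i * ρ i n (fun j => b j.val) x := mul_pos (hw0 i) hr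
        have hξx : 0 < ξ n (fun j => b j.val) x := lt_of_lt_of_le hwr (hξdom n _ x)
        have hle : μ n (fun j => b j.val) x / ξ n (fun j => b j.val) x ≤
            μ n (fun j => b j.val) x / (w i * ρ i n (fun j => b j.val) x) :=
          div_le_div_of_nonneg_left (hμnn n _ x) hwr (hξdom n _ x)
        have hlog := (Real.log_le_log_iff (div_pos hx hξx) (div_pos hx hwr)).2 hle
        have hsplit : Real.log (μ n (fun j => b j.val) x / (w i * ρ i n (fun j => b j.val) x))
            = Real.log (1 / w i) +
              Real.log (μ n (fun j => b j.val) x / ρ i n (fun j => b j.val) x) := by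
          rw [Real.log_div (ne_of_gt hx) (ne_of_gt hwr),
            Real.log_mul (ne_of_gt (hw0 i)) (ne_of_gt hr),
            Real.log_div (ne_of_gt hx) (ne_of_gt hr), one_div, Real.log_inv]
          ring
        rw [hsplit] at hlog
        have := mul_le_mul_of_nonneg_left hlog (le_of_lt hx)
        linarith [this]
      · have h0 : μ n (fun j => b j.val) x = 0 := le_antisymm (not_lt.1 hx) (hμnn n _ x)
        rw [h0]
        simp
    calc (∑ x : Fin n → X, μ n (fun j => b j.val) x *
          Real.log (μ n (fun j => b j.val) x / ξ n (fun j => b j.val) x))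
        ≤ ∑ x : Fin n → X, (μ n (fun j => b j.val) x * Real.log (1 / w i) +
            μ n (fun j => b j.val) x *
              Real.log (μ n (fun j => b j.val) x / ρ i n (fun j => b j.val) x)) :=
          Finset.sum_le_sum fun x _ => per x
      _ = Real.log (1 / w i) + ∑ x : Fin n → X, μ n (fun j => b j.val) x *
            Real.log (μ n (fun j => b j.val) x / ρ i n (fun j => b j.val) x) := by
          rw [Finset.sum_add_distrib, ← Finset.sum_mul, hμsum, one_mul]
  exact le_trans (hmain n (le_refl n)) hfinal


/-- **Convergence of a Bayesian mixture environment model (Hutter).**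
For a finite class of chronologically consistent environments `ρ i` with prior
weights `w i ∈ (0,1]` summing to 1, the Bayesian mixture
`ξ = ∑ i, w i • ρ i` satisfies, for any environment `μ`, any `n` and any action
sequence `a`,
`∑_{k=1}^n ∑_{x_{1:k}} μ(x_{<k}|a_{<k}) (μ(x_k|h_{<k} a_k) − ξ(x_k|h_{<k} a_k))²
  ≤ min_{i} { ln (1/w i) + KL(μ‖ρ i) }`,
the KL term being `+∞` when `μ` puts mass where `ρ i` does not. -/
theorem mixture_environment_convergence
    {X A : Type} [Fintype X] [Fintype A]
    {I : Type} [Fintype I] [Nonempty I]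
    (ρ : I → (n : ℕ) → (Fin n → A) → (Fin n → X) → ℝ)
    (hρnn : ∀ i n a x, 0 ≤ ρ i n a x)
    (hρsum : ∀ i n a, ∑ x : Fin n → X, ρ i n a x = 1)
    (hρchr : ∀ i n (a : Fin (n + 1) → A) (x : Fin n → X),
        ∑ z : X, ρ i (n + 1) a (Fin.snoc x z) = ρ i n (fun j => a j.castSucc) x)
    (w : I → ℝ) (hw0 : ∀ i, 0 < w i) (hw1 : ∀ i, w i ≤ 1) (hws : ∑ i, w i = 1)
    (μ : (n : ℕ) → (Fin n → A) → (Fin n → X) → ℝ)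
    (hμnn : ∀ n a x, 0 ≤ μ n a x)
    (hμsum : ∀ n a, ∑ x : Fin n → X, μ n a x = 1)
    (hμchr : ∀ n (a : Fin (n + 1) → A) (x : Fin n → X),
        ∑ z : X, μ (n + 1) a (Fin.snoc x z) = μ n (fun j => a j.castSucc) x)
    (n : ℕ) (a : Fin n → A) :
    ((∑ k : Fin n, ∑ x : Fin (k.val + 1) → X,
        μ k.val (fun j => a (Fin.castLE k.isLt.le j)) (fun j => x j.castSucc) *
          (cond μ (fun j => a (Fin.castLE k.isLt j)) x -
            cond (fun m a' x' => ∑ i, w i * ρ i m a' x')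
              (fun j => a (Fin.castLE k.isLt j)) x) ^ 2 : ℝ) : EReal)
      ≤ ⨅ i : I,
          ((Real.log (1 / w i) : EReal) +
            (if ∀ x : Fin n → X, 0 < μ n a x → 0 < ρ i n a x then
              ((∑ x : Fin n → X, μ n a x * Real.log (μ n a x / ρ i n a x) : ℝ) : EReal)
            else (⊤ : EReal))) := by
  apply le_iInf
  intro i
  by_cases hcase : ∀ x : Fin n → X, 0 < μ n a x → 0 < ρ i n a x
  · rw [if_pos hcase, ← EReal.coe_add]
    apply EReal.coe_le_coe_iff.2
    have hlogw : 0 ≤ Real.log (1 / w i) := by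
      rw [one_div, Real.log_inv]
      exact neg_nonneg.2 (Real.log_nonpos (le_of_lt (hw0 i)) (hw1 i))
    rcases Nat.eq_zero_or_pos n with hn | hn
    · subst hn
      have h1 : (∑ k : Fin 0, ∑ x : Fin (k.val + 1) → X,
          μ k.val (fun j => a (Fin.castLE k.isLt.le j)) (fun j => x j.castSucc) *
            (cond μ (fun j => a (Fin.castLE k.isLt j)) x -
              cond (fun m a' x' => ∑ i, w i * ρ i m a' x')
                (fun j => a (Fin.castLE k.isLt j)) x) ^ 2) = 0 := by
        simp
      rw [h1]
      haveI : Subsingleton (Fin 0 → X) := ⟨fun f g => funext fun j => j.elim0⟩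
      have hμ1 : ∀ x : Fin 0 → X, μ 0 a x = 1 := by
        intro x
        have h := hμsum 0 a
        rwa [Fintype.sum_subsingleton _ x] at h
      have hρ1 : ∀ x : Fin 0 → X, ρ i 0 a x = 1 := by
        intro x
        have h := hρsum i 0 a
        rwa [Fintype.sum_subsingleton _ x] at h
      have h2 : (∑ x : Fin 0 → X, μ 0 a x * Real.log (μ 0 a x / ρ i 0 a x)) = 0 := by
        apply Finset.sum_eq_zero
        intro x _
        rw [hμ1 x, hρ1 x, div_self one_ne_zero, Real.log_one, mul_zero]
      rw [h2, add_zero]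
      exact hlogw
    · set b : ℕ → A := fun t => if h : t < n then a ⟨t, h⟩ else a ⟨0, hn⟩ with hb
      have hres : ∀ (m : ℕ) (hm : m ≤ n),
          (fun j : Fin m => b j.val) = (fun j => a (Fin.castLE hm j)) := by
        intro m hm
        funext j
        rw [hb]
        dsimp only
        rw [dif_pos (lt_of_lt_of_le j.isLt hm)]
        exact congrArg a (Fin.ext rfl)
      have hba : (fun j : Fin n => b j.val) = a := by
        funext j
        rw [hb]
        dsimp only
        rw [dif_pos j.isLt]
      have hcore := core ρ hρnn hρsum hρchr w hw0 hws μ hμnn hμsum hμchr i n b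
        (by rw [hba]; exact hcase)
      rw [hba] at hcore
      have hsum : (∑ k : Fin n, ∑ x : Fin (k.val + 1) → X,
          μ k.val (fun j => a (Fin.castLE k.isLt.le j)) (fun j => x j.castSucc) *
            (cond μ (fun j => a (Fin.castLE k.isLt j)) x -
              cond (fun m a' x' => ∑ i, w i * ρ i m a' x')
                (fun j => a (Fin.castLE k.isLt j)) x) ^ 2)
          = ∑ k ∈ Finset.range n, ∑ x : Fin (k + 1) → X,
            μ k (fun j => b j.val) (fun j => x j.castSucc) *
              (cond μ (fun j => b j.val) x -
                cond (fun m a' x' => ∑ i', w i' * ρ i' m a' x') (fun j => b j.val) x) ^ 2 := by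
        rw [← Fin.sum_univ_eq_sum_range (fun k => ∑ x : Fin (k + 1) → X,
            μ k (fun j => b j.val) (fun j => x j.castSucc) *
              (cond μ (fun j => b j.val) x -
                cond (fun m a' x' => ∑ i', w i' * ρ i' m a' x') (fun j => b j.val) x) ^ 2) n]
        apply Finset.sum_congr rfl
        intro k _
        rw [hres k.val k.isLt.le, hres (k.val + 1) k.isLt]
      rw [hsum]
      exact hcore
  · rw [if_neg hcase, EReal.coe_add_top]
    exact le_top


end MixtureBound
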